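/- Let f be a defective probability generating function with gamma = 0, i.e. l = min{k : p_k > 0} >= 2, and let R be the limit function R(s) = prod_{j=1}^infty b(f(j-1,s))^{l^{-j}}. Set rho = p_l^{1/(l-1)} * R(1). Then rho lies in (0,1) and (f(t,1) - f(t,0)) / (p_l^{-1/(l-1)} * rho^{l^t}) tends to 1 as t tends to infinity. Probabilistically, the absorption time T of the defective Galton-Watson process with reproduction law f satisfies P(T > t) ~ p_l^{-1/(l-1)} * rho^{l^t}. -/

import Mathlib

open Filter Finset

set_option maxHeartbeats 1000000 in
/-- Relation (8): for a defective pgf `f` with `l = min{k : p_k > 0} ≥ 2` (i.e. `γ = 0`)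
and limit function `R`, the number `ρ = p_l^{1/(l-1)} R(1)` lies in `(0,1)` and
`P(T > t) = f^[t] 1 - f^[t] 0 ∼ p_l^{-1/(l-1)} ρ^{l^t}` as `t → ∞`. -/
theorem stmt_6
    (p : ℕ → ℝ) (ε : ℝ) (f : ℝ → ℝ) (l : ℕ) (b R : ℝ → ℝ) (ρ : ℝ)
    (hp : ∀ k, 0 ≤ p k) (hε : ε ∈ Set.Ioo (0 : ℝ) 1)
    (hsum : HasSum p (1 - ε))
    (hf : ∀ s : ℝ, f s = ∑' k, p k * s ^ k)
    (hl : 2 ≤ l) (hpl : 0 < p l) (hlmin : ∀ k, k < l → p k = 0)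
    (hb : ∀ s : ℝ, s ≠ 0 → b s = f s / (p l * s ^ l)) (hb0 : b 0 = 1)
    (hR : ∀ s ∈ Set.Icc (0 : ℝ) 1,
        Tendsto
          (fun t : ℕ => ∏ j ∈ range t, b (f^[j] s) ^ (((l : ℝ) ^ (j + 1))⁻¹))
          atTop (nhds (R s)))
    (hρ : ρ = p l ^ ((1 : ℝ) / ((l : ℝ) - 1)) * R 1) :
    ρ ∈ Set.Ioo (0 : ℝ) 1 ∧
    Tendsto
      (fun t : ℕ =>
        (f^[t] 1 - f^[t] 0) /
          (p l ^ (-(1 : ℝ) / ((l : ℝ) - 1)) * ρ ^ l ^ t))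
      atTop (nhds 1) := by
  
  obtain ⟨hε0, hε1⟩ := hε
  have hsummable : Summable p := hsum.summable
  have htsum : ∑' k, p k = 1 - ε := hsum.tsum_eq
  have h1ε : (0:ℝ) < 1 - ε := by linarith
  have h1ε1 : (1:ℝ) - ε < 1 := by linarith
  have hl1 : (1:ℝ) < (l:ℝ) := by exact_mod_cast Nat.lt_of_lt_of_le one_lt_two hl
  have hl0 : (0:ℝ) < (l:ℝ) := by linarith
  have hlm1 : (0:ℝ) < (l:ℝ) - 1 := by linarith
  -- summability for s ∈ [0,1]
  have hsums : ∀ s : ℝ, 0 ≤ s → s ≤ 1 → Summable (fun k => p k * s ^ k) := by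
    intro s hs0 hs1
    refine hsummable.of_nonneg_of_le (fun k => mul_nonneg (hp k) (pow_nonneg hs0 k)) ?_
    intro k
    exact mul_le_of_le_one_right (hp k) (pow_le_one₀ hs0 hs1)
  have hfnn : ∀ s : ℝ, 0 ≤ s → s ≤ 1 → 0 ≤ f s := by
    intro s hs0 hs1
    rw [hf]
    exact tsum_nonneg fun k => mul_nonneg (hp k) (pow_nonneg hs0 k)
  have h_lower : ∀ s : ℝ, 0 ≤ s → s ≤ 1 → p l * s ^ l ≤ f s := by
    intro s hs0 hs1
    rw [hf]
    exact Summable.le_tsum (hsums s hs0 hs1) l fun k _ => mul_nonneg (hp k) (pow_nonneg hs0 k)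
  have h_upper : ∀ s : ℝ, 0 ≤ s → s ≤ 1 → f s ≤ p l * s ^ l + (1 - ε) * s ^ (l + 1) := by
    intro s hs0 hs1
    rw [hf, Summable.tsum_eq_add_tsum_ite (hsums s hs0 hs1) l]
    have hle : ∀ k, (if k = l then 0 else p k * s ^ k) ≤ p k * s ^ (l + 1) := by
      intro k
      by_cases hk : k = l
      · simp [hk, mul_nonneg (hp l) (pow_nonneg hs0 _)]
      · simp only [hk, if_false]
        rcases lt_or_ge k l with h | h
        · simp [hlmin k h, mul_nonneg (hp k) (pow_nonneg hs0 _)]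
        · have : l + 1 ≤ k := lt_of_le_of_ne h (Ne.symm hk)
          exact mul_le_mul_of_nonneg_left (pow_le_pow_of_le_one hs0 hs1 this) (hp k)
    have hsum2 : Summable (fun k => p k * s ^ (l + 1)) := hsummable.mul_right _
    have hsum1 : Summable (fun k => if k = l then 0 else p k * s ^ k) := by
      refine hsum2.of_nonneg_of_le (fun k => ?_) hle
      by_cases hk : k = l
      · simp [hk]
      · simp only [hk, if_false]
        exact mul_nonneg (hp k) (pow_nonneg hs0 _)
    have hTT : (∑' k, if k = l then 0 else p k * s ^ k) ≤ ∑' k, p k * s ^ (l + 1) :=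
      Summable.tsum_le_tsum hle hsum1 hsum2
    have h2 : ∑' k, p k * s ^ (l + 1) = (1 - ε) * s ^ (l + 1) := by
      rw [tsum_mul_right, htsum]
    linarith [hTT]
  have h_upper2 : ∀ s : ℝ, 0 ≤ s → s ≤ 1 → f s ≤ (1 - ε) * s ^ 2 := by
    intro s hs0 hs1
    rw [hf]
    have hle : ∀ k, p k * s ^ k ≤ p k * s ^ 2 := by
      intro k
      rcases lt_or_ge k l with h | h
      · simp [hlmin k h]
      · have h2 : 2 ≤ k := le_trans hl h
        exact mul_le_mul_of_nonneg_left (pow_le_pow_of_le_one hs0 hs1 h2) (hp k)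
    have h2 : ∑' k, p k * s ^ 2 = (1 - ε) * s ^ 2 := by rw [tsum_mul_right, htsum]
    calc ∑' k, p k * s ^ k ≤ ∑' k, p k * s ^ 2 :=
          Summable.tsum_le_tsum hle (hsums s hs0 hs1) (hsummable.mul_right _)
      _ = (1 - ε) * s ^ 2 := h2
  have hf0 : f 0 = 0 := by
    have hz : (fun k => p k * (0:ℝ) ^ k) = fun _ => (0:ℝ) := by
      funext k
      rcases k with _ | k
      · simpa using hlmin 0 (by omega)
      · simp
    rw [hf, hz, tsum_zero]
  -- the sequence x t = f^[t] 1
  set x : ℕ → ℝ := fun t => f^[t] 1 with hxdef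
  have hx0 : x 0 = 1 := rfl
  have hxs : ∀ t, x (t + 1) = f (x t) := fun t => Function.iterate_succ_apply' f t 1
  have hx : ∀ t, 0 < x t ∧ x t ≤ 1 := by
    intro t
    induction t with
    | zero => exact ⟨one_pos, le_refl 1⟩
    | succ t ih =>
      rw [hxs]
      constructor
      · have := h_lower (x t) ih.1.le ih.2
        have : 0 < p l * x t ^ l := mul_pos hpl (pow_pos ih.1 l)
        linarith [h_lower (x t) ih.1.le ih.2]
      · have := h_upper2 (x t) ih.1.le ih.2
        nlinarith [ih.1, ih.2, sq_nonneg (x t)]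
  have hxgeo : ∀ t, x t ≤ (1 - ε) ^ t := by
    intro t
    induction t with
    | zero => simp [hx0]
    | succ t ih =>
      rw [hxs, pow_succ]
      have h1 := h_upper2 (x t) (hx t).1.le (hx t).2
      have h2 : x t * x t ≤ x t * (1 - ε) ^ t := mul_le_mul_of_nonneg_left ih (hx t).1.le
      have h3 : x t * (1 - ε) ^ t ≤ (1 - ε) ^ t :=
        mul_le_of_le_one_left (pow_nonneg h1ε.le t) (hx t).2
      nlinarith [(hx t).1, (hx t).2, h1ε]
  have hxlim : Tendsto x atTop (nhds 0) := by
    refine squeeze_zero (fun t => (hx t).1.le) hxgeo ?_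
    exact tendsto_pow_atTop_nhds_zero_of_lt_one h1ε.le h1ε1
  -- bounds on b(x t)
  set C : ℝ := (1 - ε) / p l with hCdef
  have hC0 : 0 ≤ C := div_nonneg h1ε.le hpl.le
  have hbx : ∀ t, 1 ≤ b (x t) ∧ b (x t) ≤ 1 + C * x t := by
    intro t
    have hxt := hx t
    have hd : 0 < p l * x t ^ l := mul_pos hpl (pow_pos hxt.1 l)
    rw [hb (x t) (ne_of_gt hxt.1)]
    constructor
    · rw [le_div_iff₀ hd, one_mul]
      exact h_lower (x t) hxt.1.le hxt.2
    · rw [div_le_iff₀ hd]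
      have h1 := h_upper (x t) hxt.1.le hxt.2
      have : (1 + C * x t) * (p l * x t ^ l) = p l * x t ^ l + (1 - ε) * x t ^ (l + 1) := by
        field_simp [hCdef]
        linear_combination (x t * x t ^ l) * (div_mul_cancel₀ (1 - ε) hpl.ne' : C * p l = 1 - ε)
      linarith
  have hbpos : ∀ t, 0 < b (x t) := fun t => lt_of_lt_of_le one_pos (hbx t).1
  -- logs
  set L : ℕ → ℝ := fun j => Real.log (b (x j)) with hLdef
  have hL0 : ∀ j, 0 ≤ L j := fun j => Real.log_nonneg (hbx j).1
  have hLle : ∀ j, L j ≤ C * (1 - ε) ^ j := by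
    intro j
    have h1 : L j ≤ b (x j) - 1 := Real.log_le_sub_one_of_pos (hbpos j)
    have h2 := (hbx j).2
    have h3 := hxgeo j
    nlinarith [hC0]
  set Q : ℕ → ℝ := fun t => ∑ j ∈ range t, ((l:ℝ) ^ (j+1))⁻¹ * L j with hQdef
  set P : ℕ → ℝ := fun t => ∏ j ∈ range t, b (x j) ^ (((l:ℝ) ^ (j+1))⁻¹) with hPdef
  have hPpos : ∀ t, 0 < P t := by
    intro t
    exact Finset.prod_pos fun j _ => Real.rpow_pos_of_pos (hbpos j) _
  have hlogP : ∀ t, Real.log (P t) = Q t := by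
    intro t
    rw [hPdef]
    rw [Real.log_prod (fun j _ => ne_of_gt (Real.rpow_pos_of_pos (hbpos j) _))]
    exact Finset.sum_congr rfl fun j _ => Real.log_rpow (hbpos j) _
  have hQ0 : ∀ t, 0 ≤ Q t :=
    fun t => Finset.sum_nonneg fun j _ => mul_nonneg (by positivity) (hL0 j)
  have hPlim : Tendsto P atTop (nhds (R 1)) := hR 1 ⟨zero_le_one, le_refl 1⟩
  have hP1 : ∀ t, 1 ≤ P t := by
    intro t
    have : P t = Real.exp (Q t) := by rw [← hlogP t, Real.exp_log (hPpos t)]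
    rw [this]
    calc (1:ℝ) = Real.exp 0 := by simp
      _ ≤ Real.exp (Q t) := Real.exp_le_exp.2 (hQ0 t)
  have hR1 : 1 ≤ R 1 := le_of_tendsto_of_tendsto' tendsto_const_nhds hPlim hP1
  have hR1pos : 0 < R 1 := lt_of_lt_of_le one_pos hR1
  have hQlim : Tendsto Q atTop (nhds (Real.log (R 1))) := by
    have := (Real.continuousAt_log (ne_of_gt hR1pos)).tendsto.comp hPlim
    refine this.congr fun t => hlogP t
  -- log x identity
  set A : ℝ := Real.log (p l) / ((l:ℝ) - 1) with hAdef
  have hlogx : ∀ t, Real.log (x t) = (l:ℝ) ^ t * (A + Q t) - A := by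
    intro t
    induction t with
    | zero => simp [hx0, hQdef]
    | succ t ih =>
      have hxt := hx t
      have hd : (0:ℝ) < p l * x t ^ l := mul_pos hpl (pow_pos hxt.1 l)
      have hfx : f (x t) = p l * x t ^ l * b (x t) := by
        rw [hb (x t) (ne_of_gt hxt.1), mul_comm (p l * x t ^ l),
          div_mul_cancel₀ _ hd.ne']
      rw [hxs, hfx]
      rw [Real.log_mul hd.ne' (ne_of_gt (hbpos t)),
        Real.log_mul (ne_of_gt hpl) (ne_of_gt (pow_pos hxt.1 l)), Real.log_pow]
      have hQs : Q (t+1) = Q t + ((l:ℝ) ^ (t+1))⁻¹ * L t := Finset.sum_range_succ _ _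
      rw [ih, hQs]
      have hlne : ((l:ℝ) ^ (t+1)) ≠ 0 := by positivity
      have hA : ((l:ℝ) - 1) * A = Real.log (p l) := by
        rw [hAdef]; field_simp
      have hcan : ((l:ℝ) ^ (t+1)) * ((((l:ℝ) ^ (t+1))⁻¹) * L t) = L t := by
        rw [← mul_assoc, mul_inv_cancel₀ hlne, one_mul]
      have hpow : ((l:ℝ)) ^ (t+1) = (l:ℝ) * (l:ℝ) ^ t := by ring
      linear_combination (-1 : ℝ) * hA + (-(A) - Q t) * hpow - hcan
  -- Q is monotone and bounded by log (R 1)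
  have hQmono : Monotone Q := by
    intro a c hac
    exact Finset.sum_le_sum_of_subset_of_nonneg (Finset.range_subset_range.2 hac)
      (fun j _ _ => mul_nonneg (by positivity) (hL0 j))
  have hQle : ∀ t, Q t ≤ Real.log (R 1) := fun t =>
    ge_of_tendsto hQlim (eventually_atTop.2 ⟨t, fun m hm => hQmono hm⟩)
  -- geometric tail bound
  have hgeom : ∀ n : ℕ, ∑ i ∈ range n, (1 - ε) ^ i ≤ ε⁻¹ := by
    intro n
    have hs : Summable (fun i : ℕ => (1 - ε) ^ i) :=
      summable_geometric_of_lt_one h1ε.le h1ε1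
    have h1 := Summable.sum_le_tsum (range n) (fun i _ => pow_nonneg h1ε.le i) hs
    rw [tsum_geometric_of_lt_one h1ε.le h1ε1] at h1
    have : (1 : ℝ) - (1 - ε) = ε := by ring
    rwa [this] at h1
  set D : ℝ := C / ε with hDdef
  have hD0 : 0 ≤ D := div_nonneg hC0 hε0.le
  have htail : ∀ t, Real.log (R 1) - Q t ≤ D * (1 - ε) ^ t * ((l:ℝ) ^ (t + 1))⁻¹ := by
    intro t
    have hstep : ∀ m, t ≤ m → Q m - Q t ≤ D * (1 - ε) ^ t * ((l:ℝ) ^ (t + 1))⁻¹ := by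
      intro m htm
      have h1 : Q m - Q t = ∑ j ∈ Ico t m, ((l:ℝ) ^ (j + 1))⁻¹ * L j := by
        rw [hQdef]
        rw [Finset.sum_Ico_eq_sub _ htm]
      have h2 : ∀ j ∈ Ico t m, ((l:ℝ) ^ (j + 1))⁻¹ * L j
          ≤ ((l:ℝ) ^ (t + 1))⁻¹ * (C * (1 - ε) ^ j) := by
        intro j hj
        have htj : t ≤ j := (Finset.mem_Ico.1 hj).1
        have hpowle : ((l:ℝ)) ^ (t + 1) ≤ ((l:ℝ)) ^ (j + 1) :=
          pow_le_pow_right₀ hl1.le (by omega)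
        have hinv : ((l:ℝ) ^ (j + 1))⁻¹ ≤ ((l:ℝ) ^ (t + 1))⁻¹ :=
          inv_anti₀ (pow_pos hl0 _) hpowle
        exact mul_le_mul hinv (hLle j) (hL0 j) (by positivity)
      have h3 : ∑ j ∈ Ico t m, ((l:ℝ) ^ (t + 1))⁻¹ * (C * (1 - ε) ^ j)
          ≤ D * (1 - ε) ^ t * ((l:ℝ) ^ (t + 1))⁻¹ := by
        have h4 : ∑ j ∈ Ico t m, C * (1 - ε) ^ j
            = C * (1 - ε) ^ t * ∑ i ∈ range (m - t), (1 - ε) ^ i := by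
          rw [Finset.sum_Ico_eq_sum_range, Finset.mul_sum]
          refine Finset.sum_congr rfl fun i _ => ?_
          rw [pow_add]
          ring
        rw [← Finset.mul_sum, h4]
        have h5 : C * (1 - ε) ^ t * ∑ i ∈ range (m - t), (1 - ε) ^ i
            ≤ C * (1 - ε) ^ t * ε⁻¹ := by
          apply mul_le_mul_of_nonneg_left (hgeom _)
          positivity
        have hinvpos : (0:ℝ) ≤ ((l:ℝ) ^ (t + 1))⁻¹ := by positivity
        calc ((l:ℝ) ^ (t + 1))⁻¹ * (C * (1 - ε) ^ t * ∑ i ∈ range (m - t), (1 - ε) ^ i)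
            ≤ ((l:ℝ) ^ (t + 1))⁻¹ * (C * (1 - ε) ^ t * ε⁻¹) :=
              mul_le_mul_of_nonneg_left h5 hinvpos
          _ = D * (1 - ε) ^ t * ((l:ℝ) ^ (t + 1))⁻¹ := by
              rw [hDdef, div_eq_mul_inv]; ring
      have := le_trans (Finset.sum_le_sum h2) h3
      linarith [h1 ▸ this]
    have hlim1 : Tendsto (fun m => Q m - Q t) atTop (nhds (Real.log (R 1) - Q t)) :=
      hQlim.sub_const (Q t)
    exact le_of_tendsto hlim1 ((eventually_ge_atTop t).mono hstep)
  -- basic facts about ρ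
  have hρpos : 0 < ρ := by
    rw [hρ]
    exact mul_pos (Real.rpow_pos_of_pos hpl _) hR1pos
  have hlogρ : Real.log ρ = A + Real.log (R 1) := by
    rw [hρ, Real.log_mul (ne_of_gt (Real.rpow_pos_of_pos hpl _)) hR1pos.ne',
      Real.log_rpow hpl, hAdef]
    ring
  have hden : ∀ t, 0 < p l ^ (-(1:ℝ) / ((l:ℝ) - 1)) * ρ ^ l ^ t :=
    fun t => mul_pos (Real.rpow_pos_of_pos hpl _) (pow_pos hρpos _)
  have hA2 : (-(1:ℝ) / ((l:ℝ) - 1)) * Real.log (p l) = -A := by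
    rw [hAdef]; field_simp
  have hlograt : ∀ t, Real.log (x t / (p l ^ (-(1:ℝ) / ((l:ℝ) - 1)) * ρ ^ l ^ t))
      = (l:ℝ) ^ t * (Q t - Real.log (R 1)) := by
    intro t
    rw [Real.log_div (hx t).1.ne' (hden t).ne',
      Real.log_mul (ne_of_gt (Real.rpow_pos_of_pos hpl _)) (ne_of_gt (pow_pos hρpos _)),
      Real.log_rpow hpl, Real.log_pow, hlogx t, hlogρ]
    have hcast : ((l ^ t : ℕ) : ℝ) = (l:ℝ) ^ t := by push_cast; ring
    rw [hcast]
    linear_combination hA2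
  -- squeeze the log of the ratio
  have hGub : ∀ t, (l:ℝ) ^ t * (Q t - Real.log (R 1)) ≤ 0 := by
    intro t
    have hpt : (0:ℝ) ≤ (l:ℝ) ^ t := by positivity
    nlinarith [mul_nonneg hpt (sub_nonneg.2 (hQle t))]
  have hGlb : ∀ t, -(D * (1 - ε) ^ t) ≤ (l:ℝ) ^ t * (Q t - Real.log (R 1)) := by
    intro t
    have h1 := htail t
    have hpt : (0:ℝ) < (l:ℝ) ^ t := pow_pos hl0 t
    have h2 : (l:ℝ) ^ t * (Real.log (R 1) - Q t)
        ≤ (l:ℝ) ^ t * (D * (1 - ε) ^ t * ((l:ℝ) ^ (t + 1))⁻¹) :=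
      mul_le_mul_of_nonneg_left h1 hpt.le
    have h3 : (l:ℝ) ^ t * (D * (1 - ε) ^ t * ((l:ℝ) ^ (t + 1))⁻¹)
        = D * (1 - ε) ^ t * (l:ℝ)⁻¹ := by
      rw [pow_succ]
      field_simp
    have h4 : D * (1 - ε) ^ t * (l:ℝ)⁻¹ ≤ D * (1 - ε) ^ t := by
      have : (l:ℝ)⁻¹ ≤ 1 := by
        rw [inv_le_one_iff₀]; right; linarith
      nlinarith [mul_nonneg hD0 (pow_nonneg h1ε.le t)]
    rw [h3] at h2
    linarith
  have hGlim : Tendsto (fun t => (l:ℝ) ^ t * (Q t - Real.log (R 1))) atTop (nhds 0) := by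
    have hlow : Tendsto (fun t : ℕ => -(D * (1 - ε) ^ t)) atTop (nhds 0) := by
      have := (tendsto_pow_atTop_nhds_zero_of_lt_one h1ε.le h1ε1).const_mul D
      simpa using this.neg
    exact tendsto_of_tendsto_of_tendsto_of_le_of_le hlow tendsto_const_nhds hGlb hGub
  -- the main convergence
  have hmain : Tendsto
      (fun t : ℕ => x t / (p l ^ (-(1:ℝ) / ((l:ℝ) - 1)) * ρ ^ l ^ t))
      atTop (nhds 1) := by
    have heq : ∀ t, x t / (p l ^ (-(1:ℝ) / ((l:ℝ) - 1)) * ρ ^ l ^ t)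
        = Real.exp ((l:ℝ) ^ t * (Q t - Real.log (R 1))) := by
      intro t
      rw [← hlograt t, Real.exp_log (div_pos (hx t).1 (hden t))]
    have h := (Real.continuous_exp.tendsto 0).comp hGlim
    rw [Real.exp_zero] at h
    exact h.congr fun t => (heq t).symm
  -- ρ < 1
  have hρlt1 : ρ < 1 := by
    by_contra hcon
    push_neg at hcon
    set c : ℝ := p l ^ (-(1:ℝ) / ((l:ℝ) - 1)) with hcdef
    have hcpos : 0 < c := Real.rpow_pos_of_pos hpl _
    have hle : ∀ t : ℕ, x t / (c * ρ ^ l ^ t) ≤ x t / c := by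
      intro t
      apply div_le_div_of_nonneg_left (hx t).1.le hcpos
      calc c = c * 1 := (mul_one c).symm
        _ ≤ c * ρ ^ l ^ t := by
            apply mul_le_mul_of_nonneg_left (one_le_pow₀ hcon) hcpos.le
    have hzc : Tendsto (fun t => x t / c) atTop (nhds 0) := by
      have := hxlim.div_const c
      simpa using this
    have hz : Tendsto (fun t : ℕ => x t / (c * ρ ^ l ^ t)) atTop (nhds 0) :=
      squeeze_zero (fun t => div_nonneg (hx t).1.le (hden t).le) hle hzc
    exact absurd (tendsto_nhds_unique hmain hz) one_ne_zero
  refine ⟨⟨hρpos, hρlt1⟩, ?_⟩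
  have hit0 : ∀ t : ℕ, f^[t] (0:ℝ) = 0 := fun t => Function.iterate_fixed hf0 t
  refine hmain.congr fun t => ?_
  rw [hit0 t]
  norm_num
  rfl
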